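/- Let a, b, c be complex numbers (or elements of a commutative ring) and let P_n, Q_n be the numerator and denominator of the n-th approximant of the continued fraction (-c)/a - c/(a+b) - c/(a+2b) - ... - c/(a+(n-1)b), defined by the recurrences P_1 = -c, Q_1 = a, P_2 = -c(a+b), Q_2 = a(a+b) - c, and P_{k+1} = (a+kb)P_k - c P_{k-1}, Q_{k+1} = (a+kb)Q_k - c Q_{k-1}. Then P_n = \sum_{i=1}^{\lfloor (n+1)/2 \rfloor} \binom{n-i}{i-1} (-c)^i \prod_{j=i}^{n-i} (a + jb). -/

import Mathlib

open Finset

noncomputable def Tm (a b c : ℂ) (n i : ℕ) : ℂ :=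
  ((n - i).choose (i-1) : ℂ) * (-c)^i * ∏ j ∈ Finset.Icc i (n-i), (a + (j : ℂ) * b)

noncomputable def Sm (a b c : ℂ) (n : ℕ) : ℂ :=
  ∑ i ∈ Finset.Icc 1 ((n+1)/2), Tm a b c n i

lemma prod_pull_bot (f : ℕ → ℂ) (u v : ℕ) (h : u ≤ v) :
    ∏ j ∈ Icc u v, f j = f u * ∏ j ∈ Icc (u+1) v, f j := by
  rw [show Icc u v = insert u (Icc (u+1) v) by ext x; simp only [Finset.mem_Icc, Finset.mem_insert]; omega,
    Finset.prod_insert (by simp only [Finset.mem_Icc]; omega)]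

lemma sum_pull_bot (f : ℕ → ℂ) (u v : ℕ) (h : u ≤ v) :
    ∑ j ∈ Icc u v, f j = f u + ∑ j ∈ Icc (u+1) v, f j := by
  rw [show Icc u v = insert u (Icc (u+1) v) by ext x; simp only [Finset.mem_Icc, Finset.mem_insert]; omega,
    Finset.sum_insert (by simp only [Finset.mem_Icc]; omega)]

lemma sum_shift (f : ℕ → ℂ) (m : ℕ) :
    ∑ i ∈ Icc 2 (m+1), f (i-1) = ∑ i ∈ Icc 1 m, f i := by
  rw [show (Icc 2 (m+1) : Finset ℕ) = (Icc 1 m).map (addRightEmbedding 1) by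
      rw [Finset.map_add_right_Icc], Finset.sum_map]
  simp [addRightEmbedding]

lemma key (a b c : ℂ) (i k : ℕ) (h2 : 2 ≤ i) (hk : 2*i ≤ k + 2) :
    Tm a b c (k+1) i = (a + (k:ℂ)*b) * Tm a b c k i + (-c) * Tm a b c (k-1) (i-1) := by
  obtain ⟨r, rfl⟩ : ∃ r, i = r + 2 := ⟨i - 2, by omega⟩
  rcases Nat.lt_or_ge k (2*r+3) with hlt | hge
  · -- k = 2r+2
    have hk2 : k = 2*r + 2 := by omega
    subst hk2
    simp only [Tm]
    rw [show 2*r+2+1 - (r+2) = r+1 by omega, show 2*r+2 - (r+2) = r by omega,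
      show 2*r+2-1 = 2*r+1 by omega, show r+2-1 = r+1 by omega,
      show 2*r+1 - (r+1) = r by omega, show r+1-1 = r by omega,
      Nat.choose_self, Nat.choose_self,
      show Icc (r+2) (r+1) = (∅ : Finset ℕ) by rw [Finset.Icc_eq_empty]; omega,
      show (r).choose (r+1) = 0 by exact Nat.choose_eq_zero_of_lt (by omega),
      show Icc (r+1) r = (∅ : Finset ℕ) by rw [Finset.Icc_eq_empty]; omega]
    push_cast
    ring
  · -- k = (r+2) + t with t ≥ r+1
    obtain ⟨t, rfl⟩ : ∃ t, k = (r+2) + t := ⟨k - (r+2), by omega⟩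
    have ht : r + 1 ≤ t := by omega
    simp only [Tm]
    rw [show r+2+t+1 - (r+2) = t+1 by omega, show r+2+t - (r+2) = t by omega,
      show r+2+t-1 = r+1+t by omega, show r+2-1 = r+1 by omega,
      show r+1+t - (r+1) = t by omega, show r+1-1 = r by omega,
      Finset.prod_Icc_succ_top (by omega : r+2 ≤ t+1),
      prod_pull_bot _ (r+1) t (by omega),
      Nat.choose_succ_succ t r]
    have hnat : (t.choose (r+1) : ℂ) * (r+1) = (t.choose r : ℂ) * ((t:ℂ) - r) := by
      have h := Nat.choose_succ_right_eq t r
      have h2c : ((t.choose (r+1) * (r+1) : ℕ) : ℂ) = ((t.choose r * (t - r) : ℕ) : ℂ) := by rw [h]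
      push_cast [Nat.cast_sub (by omega : r ≤ t)] at h2c
      exact h2c
    push_cast
    linear_combination (-(b * (-c)^(r+2) * (∏ j ∈ Icc (r+2) t, (a + (j:ℂ) * b)))) * hnat

lemma key1 (a b c : ℂ) (k : ℕ) (hk : 1 ≤ k) :
    Tm a b c (k+1) 1 = (a + (k:ℂ)*b) * Tm a b c k 1 := by
  obtain ⟨m, rfl⟩ : ∃ m, k = m + 1 := ⟨k - 1, by omega⟩
  simp only [Tm]
  rw [show m+1+1-1 = m+1 by omega, show m+1-1 = m by omega,
    Finset.prod_Icc_succ_top (by omega : 1 ≤ m+1), Nat.choose_zero_right,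
    Nat.choose_zero_right]
  push_cast
  ring

lemma Srec (a b c : ℂ) (k : ℕ) (hk : 1 ≤ k) :
    Sm a b c (k+1) = (a + (k:ℂ)*b) * Sm a b c k - c * Sm a b c (k-1) := by
  have hS1 : Sm a b c (k-1) = ∑ i ∈ Icc 1 (k/2), Tm a b c (k-1) i := by
    simp only [Sm]; rw [show (k-1+1)/2 = k/2 by omega]
  have hSk : Sm a b c k = ∑ i ∈ Icc 1 (k/2+1), Tm a b c k i := by
    simp only [Sm]
    rcases Nat.even_or_odd k with ⟨m, hm⟩ | ⟨m, hm⟩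
    · subst hm
      have hm1 : 1 ≤ m := by omega
      rw [show (m+m+1)/2 = m by omega, show (m+m)/2 + 1 = m + 1 by omega,
        Finset.sum_Icc_succ_top (by omega : 1 ≤ m+1)]
      have hz : Tm a b c (m+m) (m+1) = 0 := by
        simp only [Tm]
        rw [show m+m - (m+1) = m-1 by omega, show m+1-1 = m by omega,
          Nat.choose_eq_zero_of_lt (by omega)]
        simp
      rw [hz, add_zero]
    · subst hm
      rw [show (2*m+1+1)/2 = m+1 by omega, show (2*m+1)/2 + 1 = m+1 by omega]
  have hS2 : Sm a b c (k+1) = ∑ i ∈ Icc 1 (k/2+1), Tm a b c (k+1) i := by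
    simp only [Sm]; rw [show (k+1+1)/2 = k/2+1 by omega]
  rw [hS1, hSk, hS2]
  rw [sum_pull_bot _ 1 (k/2+1) (by omega), sum_pull_bot (fun i => Tm a b c k i) 1 (k/2+1) (by omega)]
  rw [show (1:ℕ)+1 = 2 from rfl]
  rw [← sum_shift (fun i => Tm a b c (k-1) i) (k/2)]
  rw [Finset.sum_congr rfl (fun i hi => by
    have hi' := Finset.mem_Icc.mp hi
    exact key a b c i k hi'.1 (by omega))]
  rw [key1 a b c k hk, Finset.sum_add_distrib, ← Finset.mul_sum, ← Finset.mul_sum]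
  ring

theorem stmt0 (a b c : ℂ) (P : ℕ → ℂ)
    (hP0 : P 0 = 0) (hP1 : P 1 = -c)
    (hrec : ∀ k : ℕ, 1 ≤ k → P (k+1) = (a + (k : ℂ) * b) * P k - c * P (k-1)) :
    ∀ n : ℕ, 1 ≤ n →
      P n = ∑ i ∈ Finset.Icc 1 ((n+1)/2),
        ((n - i).choose (i-1) : ℂ) * (-c)^i * ∏ j ∈ Finset.Icc i (n-i), (a + (j : ℂ) * b) := by
  have H : ∀ n, P n = Sm a b c n := by
    intro n
    induction n using Nat.strong_induction_on with
    | _ n ih =>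
      match n with
      | 0 => rw [hP0]; simp [Sm]
      | 1 =>
        rw [hP1]; simp [Sm, Tm]
      | (k+2) =>
        rw [show k+2 = (k+1)+1 from rfl, hrec (k+1) (by omega),
          show k+1-1 = k by omega, ih (k+1) (by omega), ih k (by omega),
          Srec a b c (k+1) (by omega), show k+1-1 = k by omega]
  intro n _
  rw [H n]
  simp only [Sm, Tm]
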